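/- For each γ > 0 the matrix Σ̂_γ = S + γ I_p is positive definite and M̂^⊤Σ̂_γ⁻¹M̂ is invertible, and the feasible GLS estimate θ̂_γ = (M̂^⊤Σ̂_γ⁻¹M̂)⁻¹M̂^⊤Σ̂_γ⁻¹y converges, as γ → 0⁺, to the RTS estimate θ̂_RTS = A^⊤(X^⊤X)⁻¹X^⊤y, for every fixed y ∈ ℝ^p. -/

import Mathlib

open Matrix

section helpers
variable {a b : ℕ}

lemma quad_rw (V : Matrix (Fin a) (Fin b) ℝ) (W : Matrix (Fin a) (Fin a) ℝ) (x : Fin b → ℝ) :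
    x ⬝ᵥ (Vᵀ * W * V) *ᵥ x = (V *ᵥ x) ⬝ᵥ (W *ᵥ (V *ᵥ x)) := by
  rw [Matrix.mul_assoc, ← mulVec_mulVec, dotProduct_mulVec, vecMul_transpose, mulVec_mulVec]

lemma quad_rw' (V : Matrix (Fin a) (Fin b) ℝ) (x : Fin b → ℝ) :
    x ⬝ᵥ (Vᵀ * V) *ᵥ x = (V *ᵥ x) ⬝ᵥ (V *ᵥ x) := by
  have h := quad_rw V 1 x
  simpa using h

lemma posDef_sandwich {W : Matrix (Fin a) (Fin a) ℝ} (hW : W.PosDef)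
    (V : Matrix (Fin a) (Fin b) ℝ) (hV : ∀ x, V *ᵥ x = 0 → x = 0) :
    (Vᵀ * W * V).PosDef := by
  refine Matrix.posDef_iff_dotProduct_mulVec.mpr ⟨?_, ?_⟩
  · have hWt : Wᵀ = W := hW.isHermitian.eq
    show (Vᵀ * W * V)ᴴ = _
    simp [conjTranspose_eq_transpose_of_trivial, transpose_mul, Matrix.mul_assoc, hWt]
  · intro x hx
    rw [star_trivial, quad_rw]
    have hVx : V *ᵥ x ≠ 0 := fun h => hx (hV x h)
    have h2 := hW.dotProduct_mulVec_pos hVx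
    rwa [star_trivial] at h2

lemma psd_tt (V : Matrix (Fin a) (Fin b) ℝ) : (Vᵀ * V).PosSemidef := by
  have h := posSemidef_conjTranspose_mul_self (R := ℝ) V
  rwa [conjTranspose_eq_transpose_of_trivial] at h

end helpers

set_option maxHeartbeats 1000000 in
/-- For each γ > 0 the matrix `Σ̂_γ = S + γ I` is positive definite and
`M̂ᵀ Σ̂_γ⁻¹ M̂` is invertible, and the feasible GLS estimate tends, as γ → 0⁺,
to the RTS estimate `Aᵀ (XᵀX)⁻¹ Xᵀ y`. -/
theorem stmt_1 (p n K : ℕ) (hK : 0 < K) (hKn : K ≤ n) (hnp : n < p)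
    (X : Matrix (Fin p) (Fin n) ℝ) (A : Matrix (Fin n) (Fin K) ℝ)
    (hX : IsUnit (Xᵀ * X)) (hA : IsUnit (Aᵀ * A))
    (M : Matrix (Fin p) (Fin K) ℝ) (hM : M = X * A * (Aᵀ * A)⁻¹)
    (S : Matrix (Fin p) (Fin p) ℝ)
    (hS : S = X * (1 - A * (Aᵀ * A)⁻¹ * Aᵀ) * Xᵀ)
    (Sg : ℝ → Matrix (Fin p) (Fin p) ℝ)
    (hSg : ∀ γ : ℝ, Sg γ = S + γ • (1 : Matrix (Fin p) (Fin p) ℝ))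
    (y : Fin p → ℝ) :
    (∀ γ : ℝ, 0 < γ → (Sg γ).PosDef ∧ IsUnit (Mᵀ * (Sg γ)⁻¹ * M)) ∧
      Filter.Tendsto
        (fun γ : ℝ => ((Mᵀ * (Sg γ)⁻¹ * M)⁻¹ * (Mᵀ * (Sg γ)⁻¹)).mulVec y)
        (nhdsWithin 0 (Set.Ioi 0))
        (nhds ((Aᵀ * (Xᵀ * X)⁻¹ * Xᵀ).mulVec y)) := by

  have hGd : IsUnit (Aᵀ * A).det := (Matrix.isUnit_iff_isUnit_det _).mp hA
  have hWd : IsUnit (Xᵀ * X).det := (Matrix.isUnit_iff_isUnit_det _).mp hX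
  set W := Xᵀ * X with hWdef
  set Gi := (Aᵀ * A)⁻¹ with hGidef
  set B := A * Gi with hBdef
  set P := B * Aᵀ with hPdef
  set Q := (1 : Matrix (Fin n) (Fin n) ℝ) - P with hQdef
  have hGGi : Aᵀ * A * Gi = 1 := mul_nonsing_inv _ hGd
  have hGiG : Gi * (Aᵀ * A) = 1 := nonsing_inv_mul _ hGd
  have hWWi : W * W⁻¹ = 1 := mul_nonsing_inv _ hWd
  have hWiW : W⁻¹ * W = 1 := nonsing_inv_mul _ hWd
  have hWt : Wᵀ = W := by rw [hWdef, transpose_mul, transpose_transpose]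
  have hGit : Giᵀ = Gi := by
    rw [hGidef, transpose_nonsing_inv, transpose_mul, transpose_transpose]
  have hBt : Bᵀ = Gi * Aᵀ := by rw [hBdef, transpose_mul, hGit]
  have hPt : Pᵀ = P := by
    rw [hPdef, transpose_mul, transpose_transpose, hBt, ← Matrix.mul_assoc, hBdef]
  have hQt : Qᵀ = Q := by rw [hQdef, transpose_sub, transpose_one, hPt]
  have hAtB : Aᵀ * B = 1 := by rw [hBdef, ← Matrix.mul_assoc, hGGi]
  have hPA : P * A = A := by
    rw [hPdef, Matrix.mul_assoc, hBdef, Matrix.mul_assoc, hGiG, Matrix.mul_one]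
  have hAtP : Aᵀ * P = Aᵀ := by
    rw [hPdef, ← Matrix.mul_assoc, hAtB, Matrix.one_mul]
  have hPP : P * P = P := by
    rw [hPdef, ← Matrix.mul_assoc, Matrix.mul_assoc B Aᵀ B, hAtB, Matrix.mul_one]
  have hPB : P * B = B := by rw [hPdef, Matrix.mul_assoc, hAtB, Matrix.mul_one]
  have hQA : Q * A = 0 := by rw [hQdef, Matrix.sub_mul, Matrix.one_mul, hPA, sub_self]
  have hAtQ : Aᵀ * Q = 0 := by rw [hQdef, Matrix.mul_sub, Matrix.mul_one, hAtP, sub_self]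
  have hPQ : P * Q = 0 := by rw [hQdef, Matrix.mul_sub, Matrix.mul_one, hPP, sub_self]
  have hQP : Q * P = 0 := by rw [hQdef, Matrix.sub_mul, Matrix.one_mul, hPP, sub_self]
  have hQQ : Q * Q = Q := by
    simp [hQdef, Matrix.mul_sub, Matrix.sub_mul, hPP]
  have hQB : Q * B = 0 := by rw [hBdef, ← Matrix.mul_assoc, hQA, Matrix.zero_mul]
  have hBtQ : Bᵀ * Q = 0 := by rw [hBt, Matrix.mul_assoc, hAtQ, Matrix.mul_zero]
  have hMB : M = X * B := by rw [hM, hBdef, Matrix.mul_assoc]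
  have hMt : Mᵀ = Bᵀ * Xᵀ := by rw [hMB, transpose_mul]
  have hSQ : S = X * Q * Xᵀ := hS
  -- W is positive definite
  have hXinj : ∀ v : Fin n → ℝ, X *ᵥ v = 0 → v = 0 := by
    intro v hv
    have hinj := Matrix.mulVec_injective_iff_isUnit.mpr hX
    have : W *ᵥ v = W *ᵥ 0 := by
      rw [hWdef, ← Matrix.mulVec_mulVec, hv, Matrix.mulVec_zero, Matrix.mulVec_zero]
    exact hinj this
  have hWpd : W.PosDef := by
    have h := posDef_sandwich (Matrix.PosDef.one (n := Fin p) (R := ℝ)) X hXinj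
    rwa [Matrix.mul_one] at h
  -- the resolvent family
  set T : ℝ → Matrix (Fin n) (Fin n) ℝ := fun γ => Q * W * Q + γ • Q + P with hTdef
  have hTt : ∀ γ : ℝ, (T γ)ᵀ = T γ := by
    intro γ
    simp only [hTdef, transpose_add, transpose_smul, hQt, hPt, transpose_mul, hWt,
      Matrix.mul_assoc]
  have hTpd : ∀ γ : ℝ, 0 ≤ γ → (T γ).PosDef := by
    intro γ hγ
    refine Matrix.posDef_iff_dotProduct_mulVec.mpr ⟨?_, ?_⟩
    · show (T γ)ᴴ = T γ
      rw [conjTranspose_eq_transpose_of_trivial, hTt]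
    · intro x hx
      rw [star_trivial]
      have hQform : Q = Qᵀ * Q := by rw [hQt, hQQ]
      have hPform : P = Pᵀ * P := by rw [hPt, hPP]
      have e1 : x ⬝ᵥ (Q * W * Q) *ᵥ x = (Q *ᵥ x) ⬝ᵥ (W *ᵥ (Q *ᵥ x)) := by
        rw (occs := .pos [1]) [hQt.symm]
        exact quad_rw Q W x
      have e2 : x ⬝ᵥ Q *ᵥ x = (Q *ᵥ x) ⬝ᵥ (Q *ᵥ x) := by
        rw (occs := .pos [1]) [hQform]
        exact quad_rw' Q x
      have e3 : x ⬝ᵥ P *ᵥ x = (P *ᵥ x) ⬝ᵥ (P *ᵥ x) := by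
        rw (occs := .pos [1]) [hPform]
        exact quad_rw' P x
      have expand : x ⬝ᵥ (T γ) *ᵥ x
          = (Q *ᵥ x) ⬝ᵥ (W *ᵥ (Q *ᵥ x)) + γ * ((Q *ᵥ x) ⬝ᵥ (Q *ᵥ x))
            + (P *ᵥ x) ⬝ᵥ (P *ᵥ x) := by
        simp only [hTdef, Matrix.add_mulVec, Matrix.smul_mulVec, dotProduct_add,
          dotProduct_smul, smul_eq_mul, e1, e2, e3]
      rw [expand]
      by_cases hQx : Q *ᵥ x = 0
      · have hPx : P *ᵥ x = x := by
          have : Q *ᵥ x = x - P *ᵥ x := by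
            rw [hQdef, Matrix.sub_mulVec, Matrix.one_mulVec]
          rw [this] at hQx
          have := sub_eq_zero.mp hQx
          exact this.symm
        rw [hQx, hPx]
        simp only [Matrix.mulVec_zero, dotProduct_zero, zero_dotProduct, mul_zero,
          add_zero, zero_add]
        have : (0:ℝ) < x ⬝ᵥ x := by
          have h := dotProduct_star_self_pos_iff (v := x)
          rw [star_trivial] at h
          exact h.mpr hx
        linarith
      · have h1 : 0 < (Q *ᵥ x) ⬝ᵥ (W *ᵥ (Q *ᵥ x)) := by
          have h := hWpd.dotProduct_mulVec_pos hQx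
          rwa [star_trivial] at h
        have h2 : 0 ≤ (Q *ᵥ x) ⬝ᵥ (Q *ᵥ x) := by
          have h := dotProduct_star_self_nonneg (Q *ᵥ x)
          rwa [star_trivial] at h
        have h3 : 0 ≤ (P *ᵥ x) ⬝ᵥ (P *ᵥ x) := by
          have h := dotProduct_star_self_nonneg (P *ᵥ x)
          rwa [star_trivial] at h
        have := mul_nonneg hγ h2
        linarith
  have hTdetu : ∀ γ : ℝ, 0 ≤ γ → IsUnit (T γ).det := fun γ h =>
    (Matrix.isUnit_iff_isUnit_det _).mp (hTpd γ h).isUnit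
  have hTΦ : ∀ γ : ℝ, 0 ≤ γ → T γ * (T γ)⁻¹ = 1 := fun γ h => mul_nonsing_inv _ (hTdetu γ h)
  have hΦT : ∀ γ : ℝ, 0 ≤ γ → (T γ)⁻¹ * T γ = 1 := fun γ h => nonsing_inv_mul _ (hTdetu γ h)
  have hΦt : ∀ γ : ℝ, 0 ≤ γ → ((T γ)⁻¹)ᵀ = (T γ)⁻¹ := by
    intro γ h
    rw [transpose_nonsing_inv, hTt]
  have hPT : ∀ γ : ℝ, P * T γ = P := by
    intro γ
    simp only [hTdef, Matrix.mul_add, Matrix.mul_smul, ← Matrix.mul_assoc, hPQ,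
      Matrix.zero_mul, hPP, smul_zero, zero_add, add_zero]
  have hTP : ∀ γ : ℝ, T γ * P = P := by
    intro γ
    simp only [hTdef, Matrix.add_mul, Matrix.smul_mul, Matrix.mul_assoc, hQP,
      Matrix.mul_zero, hPP, smul_zero, zero_add, add_zero]
  have hPΦ : ∀ γ : ℝ, 0 ≤ γ → P * (T γ)⁻¹ = P := by
    intro γ h
    have : P * (T γ)⁻¹ = P * T γ * (T γ)⁻¹ := by rw [hPT]
    rw [this, Matrix.mul_assoc, hTΦ γ h, Matrix.mul_one]
  have hΦP : ∀ γ : ℝ, 0 ≤ γ → (T γ)⁻¹ * P = P := by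
    intro γ h
    have : (T γ)⁻¹ * P = (T γ)⁻¹ * (T γ * P) := by rw [hTP]
    rw [this, ← Matrix.mul_assoc, hΦT γ h, Matrix.one_mul]
  have hQΦ : ∀ γ : ℝ, 0 ≤ γ → Q * (T γ)⁻¹ = (T γ)⁻¹ * Q := by
    intro γ h
    rw [hQdef, Matrix.sub_mul, Matrix.mul_sub, Matrix.one_mul, Matrix.mul_one,
      hPΦ γ h, hΦP γ h]
  have hQWQΦ : ∀ γ : ℝ, 0 ≤ γ →
      Q * W * Q * (T γ)⁻¹ = 1 - γ • (Q * (T γ)⁻¹) - P := by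
    intro γ h
    have hsplit : Q * W * Q = T γ - γ • Q - P := by
      simp only [hTdef]
      abel
    rw [hsplit, Matrix.sub_mul, Matrix.sub_mul, Matrix.smul_mul, hTΦ γ h, hPΦ γ h]
  -- trailing-matrix rewrite rules
  have hR_QQ : ∀ (r : ℕ) (Y : Matrix (Fin n) (Fin r) ℝ), Q * (Q * Y) = Q * Y := by
    intro r Y; rw [← Matrix.mul_assoc, hQQ]
  have hR_PQ : ∀ (r : ℕ) (Y : Matrix (Fin n) (Fin r) ℝ), P * (Q * Y) = 0 := by
    intro r Y; rw [← Matrix.mul_assoc, hPQ, Matrix.zero_mul]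
  have hR_QP : ∀ (r : ℕ) (Y : Matrix (Fin n) (Fin r) ℝ), Q * (P * Y) = 0 := by
    intro r Y; rw [← Matrix.mul_assoc, hQP, Matrix.zero_mul]
  have hR_AtQ : ∀ (r : ℕ) (Y : Matrix (Fin n) (Fin r) ℝ), Aᵀ * (Q * Y) = 0 := by
    intro r Y; rw [← Matrix.mul_assoc, hAtQ, Matrix.zero_mul]
  have hR_PB : ∀ (r : ℕ) (Y : Matrix (Fin K) (Fin r) ℝ), P * (B * Y) = B * Y := by
    intro r Y; rw [← Matrix.mul_assoc, hPB]
  have hR_QB : ∀ (r : ℕ) (Y : Matrix (Fin K) (Fin r) ℝ), Q * (B * Y) = 0 := by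
    intro r Y; rw [← Matrix.mul_assoc, hQB, Matrix.zero_mul]
  have hR_XtX : ∀ (r : ℕ) (Y : Matrix (Fin n) (Fin r) ℝ), Xᵀ * (X * Y) = W * Y := by
    intro r Y; rw [← Matrix.mul_assoc, ← hWdef]
  have hR_φP : ∀ γ : ℝ, 0 ≤ γ → ∀ (r : ℕ) (Y : Matrix (Fin n) (Fin r) ℝ),
      (T γ)⁻¹ * (P * Y) = P * Y := by
    intro γ h r Y; rw [← Matrix.mul_assoc, hΦP γ h]
  have hR_Pφ : ∀ γ : ℝ, 0 ≤ γ → ∀ (r : ℕ) (Y : Matrix (Fin n) (Fin r) ℝ),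
      P * ((T γ)⁻¹ * Y) = P * Y := by
    intro γ h r Y; rw [← Matrix.mul_assoc, hPΦ γ h]
  have hR_QWQφ : ∀ γ : ℝ, 0 ≤ γ → ∀ (r : ℕ) (Y : Matrix (Fin n) (Fin r) ℝ),
      Q * (W * (Q * ((T γ)⁻¹ * Y))) = Y - γ • (Q * ((T γ)⁻¹ * Y)) - P * Y := by
    intro γ h r Y
    have e : Q * (W * (Q * ((T γ)⁻¹ * Y))) = (Q * W * Q * (T γ)⁻¹) * Y := by
      simp only [Matrix.mul_assoc]
    rw [e, hQWQΦ γ h, Matrix.sub_mul, Matrix.sub_mul, Matrix.one_mul, Matrix.smul_mul,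
      Matrix.mul_assoc]
  -- the two key matrix families
  set Km : ℝ → Matrix (Fin K) (Fin K) ℝ :=
    fun γ => Bᵀ * (W - W * Q * (T γ)⁻¹ * Q * W) * B with hKmdef
  set Lm : ℝ → Matrix (Fin K) (Fin n) ℝ :=
    fun γ => Bᵀ * (1 - W * Q * (T γ)⁻¹ * Q) with hLmdef
  have hKmsplit : ∀ γ : ℝ, 0 ≤ γ → Km γ =
      ((1 - Q * (T γ)⁻¹ * Q * W) * B)ᵀ * W * ((1 - Q * (T γ)⁻¹ * Q * W) * B)
        + (Real.sqrt γ • (Q * (T γ)⁻¹ * Q * W * B))ᵀ *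
            (Real.sqrt γ • (Q * (T γ)⁻¹ * Q * W * B)) := by
    intro γ hγ
    have hs : Real.sqrt γ * Real.sqrt γ = γ := Real.mul_self_sqrt hγ
    simp only [hKmdef, transpose_smul, transpose_mul, transpose_sub, transpose_one,
      hΦt γ hγ, hQt, hWt]
    simp only [Matrix.sub_mul, Matrix.mul_sub, Matrix.smul_mul, Matrix.mul_smul,
      Matrix.one_mul, Matrix.mul_one, smul_smul, hs, Matrix.mul_assoc]
    simp only [hR_QWQφ γ hγ, hR_PQ, hR_QP, hR_φP γ hγ, hR_Pφ γ hγ, hR_QQ, hR_PB, hR_QB]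
    simp only [Matrix.mul_sub, Matrix.mul_smul, Matrix.sub_mul, Matrix.smul_mul,
      Matrix.mul_zero, Matrix.zero_mul, Matrix.mul_assoc, hR_QQ, hR_PB, hR_QB,
      hR_PQ, hR_QP, hR_φP γ hγ, hR_Pφ γ hγ, smul_zero, sub_zero, zero_sub, smul_smul, hs]
    abel
  have hKmpd : ∀ γ : ℝ, 0 ≤ γ → (Km γ).PosDef := by
    intro γ hγ
    rw [hKmsplit γ hγ]
    have hinj : ∀ x, ((1 - Q * (T γ)⁻¹ * Q * W) * B) *ᵥ x = 0 → x = 0 := by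
      intro x hx
      have hleft : Aᵀ * ((1 - Q * (T γ)⁻¹ * Q * W) * B) = 1 := by
        rw [Matrix.sub_mul, Matrix.one_mul, Matrix.mul_sub, hAtB]
        simp only [Matrix.mul_assoc, hR_AtQ]
        simp
      have h2 : (Aᵀ * ((1 - Q * (T γ)⁻¹ * Q * W) * B)) *ᵥ x = 0 := by
        rw [← Matrix.mulVec_mulVec, hx, Matrix.mulVec_zero]
      rw [hleft, Matrix.one_mulVec] at h2
      exact h2
    exact (posDef_sandwich hWpd _ hinj).add_posSemidef (psd_tt _)
  have hKmdetu : ∀ γ : ℝ, 0 ≤ γ → IsUnit (Km γ).det := fun γ h =>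
    (Matrix.isUnit_iff_isUnit_det _).mp (hKmpd γ h).isUnit
  -- more trailing rules
  have hR_BAt : ∀ (r : ℕ) (Y : Matrix (Fin n) (Fin r) ℝ), B * (Aᵀ * Y) = P * Y := by
    intro r Y; rw [← Matrix.mul_assoc, ← hPdef]
  have hR_φQWQ : ∀ γ : ℝ, 0 ≤ γ → ∀ (r : ℕ) (Y : Matrix (Fin n) (Fin r) ℝ),
      (T γ)⁻¹ * (Q * (W * (Q * Y))) = Y - γ • ((T γ)⁻¹ * (Q * Y)) - P * Y := by
    intro γ h r Y
    have hsplit : Q * W * Q = T γ - γ • Q - P := by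
      simp only [hTdef]; abel
    have e : (T γ)⁻¹ * (Q * (W * (Q * Y))) = ((T γ)⁻¹ * (Q * W * Q)) * Y := by
      simp only [Matrix.mul_assoc]
    rw [e, hsplit, Matrix.mul_sub, Matrix.mul_sub, Matrix.mul_smul, hΦT γ h, hΦP γ h,
      Matrix.sub_mul, Matrix.sub_mul, Matrix.one_mul, Matrix.smul_mul, Matrix.mul_assoc]
  -- positive definiteness of Sg γ
  have hSgPD : ∀ γ : ℝ, 0 < γ → (Sg γ).PosDef := by
    intro γ hγ
    rw [hSg γ, hSQ]
    have h1 : X * Q * Xᵀ = (Q * Xᵀ)ᵀ * (Q * Xᵀ) := by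
      rw [transpose_mul, transpose_transpose, hQt]
      simp only [Matrix.mul_assoc, hR_QQ]
    have hpsd : (X * Q * Xᵀ).PosSemidef := by rw [h1]; exact psd_tt _
    have hpd : (γ • (1 : Matrix (Fin p) (Fin p) ℝ)).PosDef := by
      refine Matrix.posDef_iff_dotProduct_mulVec.mpr ⟨?_, ?_⟩
      · show _ᴴ = _
        rw [conjTranspose_eq_transpose_of_trivial, transpose_smul, transpose_one]
      · intro x hx
        rw [Matrix.smul_mulVec, Matrix.one_mulVec, dotProduct_smul, star_trivial,
          smul_eq_mul]
        have : (0:ℝ) < x ⬝ᵥ x := by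
          have h := dotProduct_star_self_pos_iff (v := x)
          rw [star_trivial] at h
          exact h.mpr hx
        exact mul_pos hγ this
    exact Matrix.PosDef.posSemidef_add hpsd hpd
  -- explicit inverse of Sg γ
  have hSginv : ∀ γ : ℝ, 0 < γ →
      (Sg γ)⁻¹ = γ⁻¹ • (1 - X * Q * (T γ)⁻¹ * Q * Xᵀ) := by
    intro γ hγ
    apply Matrix.inv_eq_right_inv
    have key : (X * Q * Xᵀ + γ • 1) * (1 - X * Q * (T γ)⁻¹ * Q * Xᵀ) = γ • 1 := by
      simp only [Matrix.add_mul, Matrix.mul_sub, Matrix.sub_mul, Matrix.smul_mul,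
        Matrix.mul_one, Matrix.one_mul, Matrix.mul_assoc, hR_XtX]
      simp only [hR_QWQφ γ hγ.le, Matrix.mul_sub, Matrix.mul_smul, Matrix.mul_assoc,
        hR_PQ, Matrix.mul_zero, sub_zero]
      abel
    rw [hSg γ, hSQ, Matrix.mul_smul, key, smul_smul, inv_mul_cancel₀ hγ.ne', one_smul]
  have hMtSi : ∀ γ : ℝ, 0 < γ → Mᵀ * (Sg γ)⁻¹ = γ⁻¹ • (Lm γ * Xᵀ) := by
    intro γ hγ
    rw [hSginv γ hγ, hMt, Matrix.mul_smul]
    congr 1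
    simp only [hLmdef, Matrix.mul_sub, Matrix.sub_mul, Matrix.mul_one, Matrix.one_mul,
      Matrix.mul_assoc, hR_XtX]
  have hMtSiM : ∀ γ : ℝ, 0 < γ → Mᵀ * (Sg γ)⁻¹ * M = γ⁻¹ • Km γ := by
    intro γ hγ
    rw [hMtSi γ hγ, Matrix.smul_mul]
    congr 1
    simp only [hLmdef, hKmdef, hMB, Matrix.mul_sub, Matrix.sub_mul, Matrix.mul_one,
      Matrix.one_mul, Matrix.mul_assoc, hR_XtX]
  have hUnit : ∀ γ : ℝ, 0 < γ → IsUnit (Mᵀ * (Sg γ)⁻¹ * M) := by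
    intro γ hγ
    rw [hMtSiM γ hγ, Matrix.isUnit_iff_isUnit_det, Matrix.det_smul, isUnit_iff_ne_zero]
    exact mul_ne_zero (pow_ne_zero _ (inv_ne_zero hγ.ne'))
      ((hKmdetu γ hγ.le).ne_zero)
  have hInvComb : ∀ γ : ℝ, 0 < γ →
      (Mᵀ * (Sg γ)⁻¹ * M)⁻¹ * (Mᵀ * (Sg γ)⁻¹) = (Km γ)⁻¹ * Lm γ * Xᵀ := by
    intro γ hγ
    have h1 : (Mᵀ * (Sg γ)⁻¹ * M)⁻¹ = γ • (Km γ)⁻¹ := by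
      rw [hMtSiM γ hγ]
      apply Matrix.inv_eq_left_inv
      rw [Matrix.smul_mul, Matrix.mul_smul, smul_smul, mul_inv_cancel₀ hγ.ne',
        nonsing_inv_mul _ (hKmdetu γ hγ.le), one_smul]
    rw [h1, hMtSi γ hγ, Matrix.smul_mul, Matrix.mul_smul, smul_smul,
      mul_inv_cancel₀ hγ.ne', one_smul]
    exact (Matrix.mul_assoc _ _ _).symm
  -- the limiting identity
  have hP1Q : P = 1 - Q := by rw [hQdef, sub_sub_cancel]
  have hL0 : Lm 0 = Km 0 * (Aᵀ * W⁻¹) := by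
    simp only [hLmdef, hKmdef]
    simp only [Matrix.mul_sub, Matrix.sub_mul, Matrix.mul_one, Matrix.one_mul,
      Matrix.mul_assoc, hR_BAt]
    rw [hP1Q]
    simp only [Matrix.mul_sub, Matrix.sub_mul, Matrix.mul_one, Matrix.one_mul,
      Matrix.mul_assoc, hWWi]
    simp only [hR_φQWQ 0 le_rfl, zero_smul, sub_zero, hP1Q, Matrix.sub_mul,
      Matrix.mul_sub, Matrix.one_mul, Matrix.mul_one, Matrix.mul_assoc, hWWi, hR_QQ]
    abel
  have hval : (Km 0)⁻¹ * Lm 0 = Aᵀ * W⁻¹ := by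
    rw [hL0, ← Matrix.mul_assoc, nonsing_inv_mul _ (hKmdetu 0 le_rfl), Matrix.one_mul]
  clear_value W Gi B P Q T Km Lm
  -- continuity
  have hTcont : Continuous T := by
    rw [hTdef]
    exact (continuous_const.add (continuous_id.smul continuous_const)).add continuous_const
  have hdet0 : ContinuousAt Ring.inverse ((T 0).det) := by
    rw [Ring.inverse_eq_inv']
    exact continuousAt_inv₀ (hTdetu 0 le_rfl).ne_zero
  have hΦcont : ContinuousAt (fun γ => (T γ)⁻¹) 0 :=
    (continuousAt_matrix_inv (T 0) hdet0).comp hTcont.continuousAt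
  have hKmcont : ContinuousAt Km 0 := by
    have houter : Continuous (fun N : Matrix (Fin n) (Fin n) ℝ =>
        Bᵀ * (W - W * Q * N * Q * W) * B) := by
      have h1 : Continuous (fun N : Matrix (Fin n) (Fin n) ℝ => W * Q * N) :=
        continuous_const.matrix_mul continuous_id
      have h2 : Continuous (fun N : Matrix (Fin n) (Fin n) ℝ => W * Q * N * Q * W) :=
        (h1.matrix_mul continuous_const).matrix_mul continuous_const
      exact (continuous_const.matrix_mul (continuous_const.sub h2)).matrix_mul
        continuous_const
    have : Km = (fun N : Matrix (Fin n) (Fin n) ℝ => Bᵀ * (W - W * Q * N * Q * W) * B) ∘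
        (fun γ => (T γ)⁻¹) := by
      rw [hKmdef]; rfl
    rw [this]
    exact houter.continuousAt.comp hΦcont
  have hLmcont : ContinuousAt Lm 0 := by
    have houter : Continuous (fun N : Matrix (Fin n) (Fin n) ℝ =>
        Bᵀ * (1 - W * Q * N * Q)) := by
      have h1 : Continuous (fun N : Matrix (Fin n) (Fin n) ℝ => W * Q * N) :=
        continuous_const.matrix_mul continuous_id
      exact continuous_const.matrix_mul (continuous_const.sub
        (h1.matrix_mul continuous_const))
    have : Lm = (fun N : Matrix (Fin n) (Fin n) ℝ => Bᵀ * (1 - W * Q * N * Q)) ∘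
        (fun γ => (T γ)⁻¹) := by
      rw [hLmdef]; rfl
    rw [this]
    exact houter.continuousAt.comp hΦcont
  have hKidet0 : ContinuousAt Ring.inverse ((Km 0).det) := by
    rw [Ring.inverse_eq_inv']
    exact continuousAt_inv₀ (hKmdetu 0 le_rfl).ne_zero
  have hKminvcont : ContinuousAt (fun γ => (Km γ)⁻¹) 0 :=
    (continuousAt_matrix_inv (Km 0) hKidet0).comp hKmcont
  have hgcont : ContinuousAt (fun γ => ((Km γ)⁻¹ * Lm γ * Xᵀ) *ᵥ y) 0 := by
    have houter : Continuous (fun NN : Matrix (Fin K) (Fin K) ℝ × Matrix (Fin K) (Fin n) ℝ =>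
        (NN.1 * NN.2 * Xᵀ) *ᵥ y) :=
      ((continuous_fst.matrix_mul continuous_snd).matrix_mul
        continuous_const).matrix_mulVec continuous_const
    have hpair : ContinuousAt (fun γ : ℝ => ((Km γ)⁻¹, Lm γ)) 0 :=
      hKminvcont.prodMk hLmcont
    have hcomp : (fun γ : ℝ => ((Km γ)⁻¹ * Lm γ * Xᵀ) *ᵥ y) =
        (fun NN : Matrix (Fin K) (Fin K) ℝ × Matrix (Fin K) (Fin n) ℝ =>
          (NN.1 * NN.2 * Xᵀ) *ᵥ y) ∘ (fun γ : ℝ => ((Km γ)⁻¹, Lm γ)) := by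
      funext γ; rfl
    rw [hcomp]
    exact ContinuousAt.comp houter.continuousAt hpair
  -- assembly
  refine ⟨fun γ hγ => ⟨hSgPD γ hγ, hUnit γ hγ⟩, ?_⟩
  have htarget : ((Km 0)⁻¹ * Lm 0 * Xᵀ) *ᵥ y = (Aᵀ * W⁻¹ * Xᵀ) *ᵥ y := by rw [hval]
  have htend : Filter.Tendsto (fun γ => ((Km γ)⁻¹ * Lm γ * Xᵀ) *ᵥ y)
      (nhdsWithin 0 (Set.Ioi 0)) (nhds ((Aᵀ * W⁻¹ * Xᵀ) *ᵥ y)) := by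
    have h := hgcont.tendsto
    rw [htarget] at h
    exact h.mono_left nhdsWithin_le_nhds
  refine Filter.Tendsto.congr' ?_ htend
  filter_upwards [eventually_mem_nhdsWithin] with γ hγ
  rw [hInvComb γ hγ]
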